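/- Let λ : ℕ → ℂ satisfy Σ_{n=0}^∞ |λ_n|² = 1. Then Σ_{n=0}^∞ Σ_{k=0}^∞ |λ_{n+2k}|² · 2^{-(n+2k)} · Nat.choose (n+2k) (2k) = (1 + |λ_0|²)/2. -/

import Mathlib

open scoped BigOperators

open Finset in
private lemma even_choose_sum_int (m : ℕ) (hm : m ≠ 0) :
    2 * ∑ k ∈ range (m / 2 + 1), (m.choose (2 * k) : ℤ) = 2 ^ m := by
  have himg : (range (m + 1)).filter (fun j => Even j)
      = (range (m / 2 + 1)).image (fun k => 2 * k) := by
    ext j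
    simp only [mem_filter, mem_range, mem_image]
    constructor
    · rintro ⟨hj, k, rfl⟩
      exact ⟨k, by omega, by omega⟩
    · rintro ⟨k, hk, rfl⟩
      exact ⟨by omega, k, by omega⟩
  have h1 : ∑ j ∈ range (m + 1), ((1 : ℤ) + (-1) ^ j) * m.choose j = 2 ^ m := by
    simp_rw [add_mul, one_mul, Finset.sum_add_distrib]
    rw [Int.alternating_sum_range_choose_of_ne hm]
    have h2 : ∑ j ∈ range (m + 1), (m.choose j : ℤ) = 2 ^ m := by
      exact_mod_cast Nat.sum_range_choose m
    rw [h2, add_zero]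
  have h3 : ∀ j ∈ range (m + 1), ((1 : ℤ) + (-1) ^ j) * m.choose j
      = if Even j then 2 * (m.choose j : ℤ) else 0 := by
    intro j _
    rcases Nat.even_or_odd j with hj | hj
    · rw [if_pos hj, hj.neg_one_pow]; ring
    · rw [if_neg (Nat.not_even_iff_odd.mpr hj), hj.neg_one_pow]; ring
  rw [Finset.sum_congr rfl h3, ← Finset.sum_filter, himg,
    Finset.sum_image (by intro x _ y _ hxy; simp only at hxy; omega)] at h1
  rw [Finset.mul_sum]
  exact h1

private lemma even_choose_sum (m : ℕ) (hm : m ≠ 0) :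
    2 * ∑ k ∈ Finset.range (m / 2 + 1), m.choose (2 * k) = 2 ^ m := by
  exact_mod_cast even_choose_sum_int m hm

/-- For a normalized sequence `λ`, the probability that Bob's mode has even
photon number after the beam splitter (correlated inputs) is determined by
this double-sum identity: it equals `(1 + |λ₀|²)/2`. -/
theorem generalized_NOON_even_parity_sum
    (lam : ℕ → ℂ) (h : ∑' n : ℕ, ‖lam n‖ ^ 2 = 1) :
    ∑' n : ℕ, ∑' k : ℕ,
      ‖lam (n + 2 * k)‖ ^ 2 * ((2 : ℝ) ^ (n + 2 * k))⁻¹ *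
        (Nat.choose (n + 2 * k) (2 * k) : ℝ)
      = (1 + ‖lam 0‖ ^ 2) / 2 := by
  set a : ℕ → ℝ := fun n => ‖lam n‖ ^ 2 with ha
  have ha0 : ∀ n, 0 ≤ a n := fun n => sq_nonneg _
  have hsum : Summable a := by
    by_contra hs
    rw [tsum_eq_zero_of_not_summable hs] at h
    norm_num at h
  set A : ℕ → ENNReal := fun n => ENNReal.ofReal (a n) with hA
  have hAsum : ∑' n, A n = 1 := by
    rw [hA]
    rw [← ENNReal.ofReal_tsum_of_nonneg ha0 hsum, h, ENNReal.ofReal_one]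
  -- the ENNReal version of the summand
  set G : ℕ × ℕ → ENNReal := fun p =>
    A (p.1 + 2 * p.2) * ((2 : ENNReal) ^ (p.1 + 2 * p.2))⁻¹ *
      ((p.1 + 2 * p.2).choose (2 * p.2) : ENNReal) with hG
  set F : ℕ × ℕ → ENNReal := fun p =>
    if 2 * p.2 ≤ p.1 then
      A p.1 * ((2 : ENNReal) ^ p.1)⁻¹ * (p.1.choose (2 * p.2) : ENNReal)
    else 0 with hF
  -- per-m inner ENNReal sum
  have hinner : ∀ m : ℕ, ∑' k : ℕ, F (m, k)
      = A m * ((2 : ENNReal) ^ m)⁻¹ *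
        ((∑ k ∈ Finset.range (m / 2 + 1), m.choose (2 * k) : ℕ) : ENNReal) := by
    intro m
    have hz : ∀ k ∉ Finset.range (m / 2 + 1), F (m, k) = 0 := by
      intro k hk
      simp only [Finset.mem_range] at hk
      simp only [hF]
      rw [if_neg (by omega)]
    rw [tsum_eq_sum hz]
    have : ∀ k ∈ Finset.range (m / 2 + 1),
        F (m, k) = A m * ((2 : ENNReal) ^ m)⁻¹ * (m.choose (2 * k) : ENNReal) := by
      intro k hk
      simp only [Finset.mem_range] at hk
      simp only [hF]
      rw [if_pos (by omega)]
    rw [Finset.sum_congr rfl this, ← Finset.mul_sum, Nat.cast_sum]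
  -- total ENNReal sum
  have htot : ∑' m : ℕ, ∑' k : ℕ, F (m, k) = 2⁻¹ + A 0 * 2⁻¹ := by
    have hterm : ∀ m : ℕ, ∑' k : ℕ, F (m, k)
        = A m * 2⁻¹ + (if m = 0 then A 0 * 2⁻¹ else 0) := by
      intro m
      rw [hinner m]
      rcases eq_or_ne m 0 with rfl | hm
      · have h1 : ((∑ k ∈ Finset.range (0 / 2 + 1), Nat.choose 0 (2 * k) : ℕ) : ENNReal)
            = 1 := by norm_num
        rw [h1, if_pos rfl, pow_zero, inv_one, mul_one, ← mul_add,
          ENNReal.inv_two_add_inv_two, mul_one]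
      · rw [if_neg hm, add_zero]
        have hc : ((∑ k ∈ Finset.range (m / 2 + 1), m.choose (2 * k) : ℕ) : ENNReal)
            = 2 ^ m * 2⁻¹ := by
          rw [← div_eq_mul_inv, ENNReal.eq_div_iff (by norm_num) (by norm_num)]
          exact_mod_cast even_choose_sum m hm
        have hring : A m * ((2 : ENNReal) ^ m)⁻¹ * (2 ^ m * 2⁻¹)
            = A m * 2⁻¹ * (((2 : ENNReal) ^ m)⁻¹ * 2 ^ m) := by ring
        rw [hc, hring, ENNReal.inv_mul_cancel (pow_ne_zero m (by norm_num))
          (ENNReal.pow_ne_top (by norm_num)), mul_one]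
    simp_rw [hterm]
    rw [ENNReal.tsum_add, ENNReal.tsum_mul_right, hAsum, one_mul, tsum_ite_eq]
  -- reindex: sum of G equals sum of F
  have hreindex : ∑' n : ℕ, ∑' k : ℕ, G (n, k) = ∑' m : ℕ, ∑' k : ℕ, F (m, k) := by
    rw [← ENNReal.tsum_prod', ← ENNReal.tsum_prod']
    have hinj : Function.Injective (fun p : ℕ × ℕ => (p.1 + 2 * p.2, p.2)) := by
      intro p q hpq
      simp only [Prod.mk.injEq] at hpq
      exact Prod.ext (by omega) hpq.2
    have hsupp : Function.support F ⊆ Set.range (fun p : ℕ × ℕ => (p.1 + 2 * p.2, p.2)) := by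
      rintro ⟨m, k⟩ hmk
      simp only [Function.mem_support, hF] at hmk
      by_cases hle : 2 * k ≤ m
      · exact ⟨(m - 2 * k, k), by simp only; congr 1; omega⟩
      · exact absurd (if_neg hle) hmk
    have := hinj.tsum_eq hsupp
    rw [← this]
    apply tsum_congr
    rintro ⟨n, k⟩
    simp only [hG, hF]
    rw [if_pos (by omega)]
  have hGtot : ∑' n : ℕ, ∑' k : ℕ, G (n, k) = 2⁻¹ + A 0 * 2⁻¹ := hreindex.trans htot
  -- convert the real sum to the ENNReal sum
  have hofReal : ∀ n k : ℕ,
      ENNReal.ofReal (a (n + 2 * k) * ((2 : ℝ) ^ (n + 2 * k))⁻¹ *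
        ((n + 2 * k).choose (2 * k) : ℝ)) = G (n, k) := by
    intro n k
    rw [ENNReal.ofReal_mul (by positivity), ENNReal.ofReal_mul (ha0 _),
      ENNReal.ofReal_natCast, ENNReal.ofReal_inv_of_pos (by positivity),
      ENNReal.ofReal_pow (by norm_num : (0:ℝ) ≤ 2), ENNReal.ofReal_ofNat]
  have hnn : ∀ n k : ℕ, 0 ≤ a (n + 2 * k) * ((2 : ℝ) ^ (n + 2 * k))⁻¹ *
      ((n + 2 * k).choose (2 * k) : ℝ) := by
    intro n k; positivity
  have hinnerR : ∀ n : ℕ, ∑' k : ℕ,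
      a (n + 2 * k) * ((2 : ℝ) ^ (n + 2 * k))⁻¹ * ((n + 2 * k).choose (2 * k) : ℝ)
      = (∑' k : ℕ, G (n, k)).toReal := by
    intro n
    rw [ENNReal.tsum_toReal_eq (fun k => by
      rw [← hofReal n k]; exact ENNReal.ofReal_ne_top)]
    apply tsum_congr
    intro k
    rw [← hofReal n k, ENNReal.toReal_ofReal (hnn n k)]
  have hfin : ∀ n : ℕ, ∑' k : ℕ, G (n, k) ≠ ⊤ := by
    intro n
    refine ne_top_of_le_ne_top ?_ (ENNReal.le_tsum (f := fun n => ∑' k : ℕ, G (n, k)) n)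
    rw [hGtot]
    exact ENNReal.add_ne_top.mpr ⟨by norm_num,
      ENNReal.mul_ne_top ENNReal.ofReal_ne_top (by norm_num)⟩
  calc ∑' n : ℕ, ∑' k : ℕ,
      a (n + 2 * k) * ((2 : ℝ) ^ (n + 2 * k))⁻¹ * ((n + 2 * k).choose (2 * k) : ℝ)
      = ∑' n : ℕ, (∑' k : ℕ, G (n, k)).toReal := by
        exact tsum_congr hinnerR
    _ = (∑' n : ℕ, ∑' k : ℕ, G (n, k)).toReal := (ENNReal.tsum_toReal_eq hfin).symm
    _ = ((2 : ENNReal)⁻¹ + A 0 * 2⁻¹).toReal := by rw [hGtot]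
    _ = (1 + a 0) / 2 := by
        rw [ENNReal.toReal_add (by norm_num)
          (ENNReal.mul_ne_top ENNReal.ofReal_ne_top (by norm_num)),
          ENNReal.toReal_mul, ENNReal.toReal_inv, ENNReal.toReal_ofNat,
          ENNReal.toReal_ofReal (ha0 0)]
        ring
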